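/- Let z ∈ ℂⁿ with unit-modulus entries, C = zz* + σW with W Hermitian, and x ∈ ℂⁿ with unit-modulus entries satisfying Cx = diag(μ)x where μₖ = |(Cx)ₖ|. Choose the global phase so z*x = |z*x|. If n - (3/2)d₂(z,x)² - σ‖Wx‖_∞ - σ‖W‖₂ > 0, then S := Re(ddiag(Cxx*)) - C is positive semidefinite of rank n - 1, and hence xx* is the unique SDP solution and x the unique (up to phase) maximizer of v*Cv over unit-modulus vectors v. -/

import Mathlib

noncomputable section

namespace PhaseSync

open Complex

variable {n : ℕ}

/-- Euclidean (ℓ²) norm on `Fin n → ℂ`. -/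
def l2norm (v : Fin n → ℂ) : ℝ :=
  Real.sqrt (∑ k, ‖v k‖ ^ 2)

/-- Entrywise sup (ℓ∞) norm on `Fin n → ℂ`. -/
def linfnorm (v : Fin n → ℂ) : ℝ :=
  ⨆ k, ‖v k‖

/-- Hermitian inner product `x*y = ∑ₖ conj(xₖ) yₖ`. -/
def herm (x y : Fin n → ℂ) : ℂ :=
  ∑ k, (starRingEnd ℂ) (x k) * y k

/-- Distance up to a global phase: `d₂(x,y) = inf_θ ‖x e^{iθ} - y‖₂`. -/
def d2 (x y : Fin n → ℂ) : ℝ :=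
  ⨅ θ : ℝ, l2norm (fun k => Complex.exp (θ * Complex.I) * x k - y k)

/-- Sup-norm distance up to a global phase. -/
def dinf (x y : Fin n → ℂ) : ℝ :=
  ⨅ θ : ℝ, linfnorm (fun k => Complex.exp (θ * Complex.I) * x k - y k)

/-- ℓ² operator (spectral) norm of a matrix. -/
def opNorm (A : Matrix (Fin n) (Fin n) ℂ) : ℝ :=
  ⨆ u : {u : Fin n → ℂ // l2norm u = 1}, l2norm (A.mulVec u)

/-- Entrywise projection to the unit circle (on nonzero entries). -/
def proj (v : Fin n → ℂ) : Fin n → ℂ :=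
  fun k => v k / (‖v k‖ : ℂ)

/-- The rank-one matrix `z z*`. -/
def outer (z : Fin n → ℂ) : Matrix (Fin n) (Fin n) ℂ :=
  Matrix.of fun i j => z i * (starRingEnd ℂ) (z j)

/-- The operator `ℒ v = (z*v/n) z + (σ/n) W v`. -/
def Lop (z : Fin n → ℂ) (σ : ℝ) (W : Matrix (Fin n) (Fin n) ℂ) (v : Fin n → ℂ) : Fin n → ℂ :=
  (herm z v / (n : ℂ)) • z + (σ / (n : ℝ)) • W.mulVec v

open scoped ComplexOrder

/-! ### Auxiliary lemmas -/

section Aux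

open Matrix

lemma l2norm_eq_norm (v : Fin n → ℂ) :
    l2norm v = ‖(WithLp.equiv 2 (Fin n → ℂ)).symm v‖ := by
  rw [EuclideanSpace.norm_eq]
  simp [l2norm]

lemma herm_eq_inner (u v : Fin n → ℂ) :
    herm u v = inner (𝕜 := ℂ) ((WithLp.equiv 2 (Fin n → ℂ)).symm u)
      ((WithLp.equiv 2 (Fin n → ℂ)).symm v) := by
  simp [herm, PiLp.inner_apply, RCLike.inner_apply, mul_comm]

lemma l2norm_nonneg (v : Fin n → ℂ) : 0 ≤ l2norm v := Real.sqrt_nonneg _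

lemma sq_l2norm (v : Fin n → ℂ) : l2norm v ^ 2 = ∑ k, ‖v k‖ ^ 2 :=
  Real.sq_sqrt (Finset.sum_nonneg fun _ _ => sq_nonneg _)

lemma abs_herm_le (u v : Fin n → ℂ) :
    ‖herm u v‖ ≤ l2norm u * l2norm v := by
  rw [herm_eq_inner, l2norm_eq_norm, l2norm_eq_norm]
  exact norm_inner_le_norm _ _

lemma l2norm_eq_zero {v : Fin n → ℂ} (h : l2norm v = 0) : v = 0 := by
  rw [l2norm_eq_norm, norm_eq_zero] at h
  funext k
  exact congrFun (congrArg (WithLp.equiv 2 (Fin n → ℂ)) h) k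

lemma l2norm_smul (c : ℂ) (v : Fin n → ℂ) :
    l2norm (c • v) = ‖c‖ * l2norm v := by
  have : (WithLp.equiv 2 (Fin n → ℂ)).symm (c • v)
      = c • (WithLp.equiv 2 (Fin n → ℂ)).symm v := rfl
  rw [l2norm_eq_norm, this, norm_smul, l2norm_eq_norm]

lemma abs_le_linfnorm (v : Fin n → ℂ) (k : Fin n) :
    ‖v k‖ ≤ linfnorm v := by
  exact le_ciSup (f := fun k => ‖v k‖)
    (Set.Finite.bddAbove (Set.finite_range _)) k

lemma l2norm_mulVec_le_norm (W : Matrix (Fin n) (Fin n) ℂ) (u : Fin n → ℂ) :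
    l2norm (W.mulVec u) ≤
      ‖(LinearMap.toContinuousLinearMap (Matrix.toEuclideanLin W))‖ * l2norm u := by
  have h1 : l2norm (W.mulVec u)
      = ‖(LinearMap.toContinuousLinearMap (Matrix.toEuclideanLin W))
          ((WithLp.equiv 2 (Fin n → ℂ)).symm u)‖ := by
    rw [l2norm_eq_norm]
    congr 1
  rw [h1, l2norm_eq_norm]
  exact (LinearMap.toContinuousLinearMap (Matrix.toEuclideanLin W)).le_opNorm _

lemma bddAbove_opNorm (W : Matrix (Fin n) (Fin n) ℂ) :
    BddAbove (Set.range fun u : {u : Fin n → ℂ // l2norm u = 1} =>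
      l2norm (W.mulVec u)) := by
  refine ⟨‖(LinearMap.toContinuousLinearMap (Matrix.toEuclideanLin W))‖, ?_⟩
  rintro - ⟨u, rfl⟩
  calc l2norm (W.mulVec u.1) ≤ _ * l2norm u.1 := l2norm_mulVec_le_norm W u.1
  _ = _ := by rw [u.2, mul_one]

lemma l2norm_mulVec_le (W : Matrix (Fin n) (Fin n) ℂ) (u : Fin n → ℂ) :
    l2norm (W.mulVec u) ≤ opNorm W * l2norm u := by
  have l2z : l2norm (0 : Fin n → ℂ) = 0 := by simp [l2norm]
  rcases eq_or_ne (l2norm u) 0 with h | h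
  · rw [l2norm_eq_zero h, Matrix.mulVec_zero, l2z, mul_zero]
  · have hpos : 0 < l2norm u := lt_of_le_of_ne (l2norm_nonneg u) (Ne.symm h)
    set c : ℂ := (((l2norm u)⁻¹ : ℝ) : ℂ)
    have habs : ‖c‖ = (l2norm u)⁻¹ := by
      rw [Complex.norm_real, Real.norm_eq_abs, _root_.abs_of_nonneg (inv_nonneg.2 (l2norm_nonneg u))]
    have hu1 : l2norm (c • u) = 1 := by
      rw [l2norm_smul, habs, inv_mul_cancel₀ h]
    have hle : l2norm (W.mulVec (c • u)) ≤ opNorm W :=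
      le_ciSup (bddAbove_opNorm W) (⟨c • u, hu1⟩ : {u : Fin n → ℂ // l2norm u = 1})
    rw [Matrix.mulVec_smul, l2norm_smul, habs] at hle
    calc l2norm (W.mulVec u) = l2norm u * ((l2norm u)⁻¹ * l2norm (W.mulVec u)) := by
          field_simp
    _ ≤ l2norm u * opNorm W := by
          exact mul_le_mul_of_nonneg_left hle (le_of_lt hpos)
    _ = opNorm W * l2norm u := mul_comm _ _

lemma herm_self (z : Fin n → ℂ) (hz : ∀ k, ‖z k‖ = 1) :
    herm z z = (n : ℂ) := by
  have h : ∀ k, (starRingEnd ℂ) (z k) * z k = 1 := by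
    intro k
    rw [mul_comm, Complex.mul_conj, Complex.normSq_eq_norm_sq, hz, one_pow, Complex.ofReal_one]
  simp [herm, h, Finset.card_univ]

lemma l2norm_unit (z : Fin n → ℂ) (hz : ∀ k, ‖z k‖ = 1) :
    l2norm z = Real.sqrt n := by
  simp [l2norm, hz]

/-- squared distance at angle θ -/
lemma sq_dist_theta (z x : Fin n → ℂ) (hz : ∀ k, ‖z k‖ = 1)
    (hx : ∀ k, ‖x k‖ = 1) (r : ℝ) (hr : herm z x = (r : ℂ)) (θ : ℝ) :
    l2norm (fun k => Complex.exp (θ * Complex.I) * z k - x k) ^ 2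
      = 2 * n - 2 * r * Real.cos θ := by
  rw [sq_l2norm]
  have key : ∀ k, ‖Complex.exp (θ * Complex.I) * z k - x k‖ ^ 2
      = 2 - 2 * (Complex.exp (θ * Complex.I) * (z k * (starRingEnd ℂ) (x k))).re := by
    intro k
    rw [← Complex.normSq_eq_norm_sq, Complex.normSq_sub]
    have h1 : Complex.normSq (Complex.exp (θ * Complex.I) * z k) = 1 := by
      rw [Complex.normSq_eq_norm_sq, norm_mul, Complex.norm_exp_ofReal_mul_I, hz, one_mul, one_pow]
    have h2 : Complex.normSq (x k) = 1 := by
      rw [Complex.normSq_eq_norm_sq, hx, one_pow]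
    rw [h1, h2, mul_assoc]
    ring
  rw [Finset.sum_congr rfl fun k _ => key k]
  rw [Finset.sum_sub_distrib, Finset.sum_const, ← Finset.mul_sum, ← Complex.re_sum,
    ← Finset.mul_sum]
  have : ∑ k, z k * (starRingEnd ℂ) (x k) = (starRingEnd ℂ) (herm z x) := by
    rw [herm, map_sum]
    exact Finset.sum_congr rfl fun k _ => by rw [_root_.map_mul, Complex.conj_conj, mul_comm]
  rw [this, hr, Complex.conj_ofReal]
  simp [Complex.exp_ofReal_mul_I_re, Finset.card_univ]
  ring

lemma r_le_n (z x : Fin n → ℂ) (hz : ∀ k, ‖z k‖ = 1)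
    (hx : ∀ k, ‖x k‖ = 1) :
    ‖herm z x‖ ≤ n := by
  calc ‖herm z x‖ ≤ l2norm z * l2norm x := abs_herm_le z x
  _ = Real.sqrt n * Real.sqrt n := by rw [l2norm_unit z hz, l2norm_unit x hx]
  _ = n := Real.mul_self_sqrt (Nat.cast_nonneg n)

lemma d2_eq (z x : Fin n → ℂ) (hz : ∀ k, ‖z k‖ = 1)
    (hx : ∀ k, ‖x k‖ = 1)
    (hr : herm z x = ((‖herm z x‖ : ℝ) : ℂ)) :
    d2 z x = Real.sqrt (2 * n - 2 * ‖herm z x‖) := by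
  set r := ‖herm z x‖ with hrdef
  have hr0 : 0 ≤ r := norm_nonneg _
  have hrn : r ≤ n := r_le_n z x hz hx
  apply le_antisymm
  · have h0 := sq_dist_theta z x hz hx r hr 0
    have : l2norm (fun k => Complex.exp ((0:ℝ) * Complex.I) * z k - x k)
        = Real.sqrt (2 * n - 2 * r) := by
      have hnn := l2norm_nonneg (fun k => Complex.exp (((0:ℝ):ℂ) * Complex.I) * z k - x k)
      rw [← Real.sqrt_sq hnn, h0]
      simp
    calc d2 z x ≤ _ := ciInf_le ⟨0, by rintro - ⟨θ, rfl⟩; exact l2norm_nonneg _⟩ (0:ℝ)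
    _ = Real.sqrt (2 * n - 2 * r) := this
  · apply le_ciInf
    intro θ
    have hθ := sq_dist_theta z x hz hx r hr θ
    have hnn := l2norm_nonneg (fun k => Complex.exp ((θ:ℂ) * Complex.I) * z k - x k)
    rw [← Real.sqrt_sq hnn, hθ]
    apply Real.sqrt_le_sqrt
    have : r * Real.cos θ ≤ r := by
      calc r * Real.cos θ ≤ r * 1 := by
            exact mul_le_mul_of_nonneg_left (Real.cos_le_one θ) hr0
      _ = r := mul_one r
    linarith

lemma d2_sq (z x : Fin n → ℂ) (hz : ∀ k, ‖z k‖ = 1)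
    (hx : ∀ k, ‖x k‖ = 1)
    (hr : herm z x = ((‖herm z x‖ : ℝ) : ℂ)) :
    d2 z x ^ 2 = 2 * n - 2 * ‖herm z x‖ := by
  rw [d2_eq z x hz hx hr]
  exact Real.sq_sqrt (by have := r_le_n z x hz hx; linarith)

lemma d2_nonneg (z x : Fin n → ℂ) : 0 ≤ d2 z x :=
  le_ciInf fun θ => l2norm_nonneg _

lemma abs_herm_orth (z x u : Fin n → ℂ) (hu : herm x u = 0) :
    ‖herm z u‖ ≤ d2 z x * l2norm u := by
  have key : ∀ θ : ℝ, ‖herm z u‖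
      ≤ l2norm (fun k => Complex.exp ((θ:ℂ) * Complex.I) * z k - x k) * l2norm u := by
    intro θ
    have hexp : herm (fun k => Complex.exp ((θ:ℂ) * Complex.I) * z k - x k) u
        = (starRingEnd ℂ) (Complex.exp ((θ:ℂ) * Complex.I)) * herm z u - herm x u := by
      simp [herm, sub_mul, Finset.sum_sub_distrib, Finset.mul_sum, mul_assoc]
    have := abs_herm_le (fun k => Complex.exp ((θ:ℂ) * Complex.I) * z k - x k) u
    rw [hexp, hu, sub_zero, norm_mul,
      Complex.norm_conj, Complex.norm_exp_ofReal_mul_I, one_mul] at this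
    exact this
  rcases eq_or_ne (l2norm u) 0 with h0 | h0
  · have hu0 : u = 0 := l2norm_eq_zero h0
    subst hu0
    simp [herm, l2norm]
  · have hpos : 0 < l2norm u := lt_of_le_of_ne (l2norm_nonneg u) (Ne.symm h0)
    rw [mul_comm (d2 z x), ← div_le_iff₀' hpos] at *
    apply le_ciInf
    intro θ
    rw [div_le_iff₀' hpos, mul_comm]
    exact key θ

lemma herm_eq_dot (v w : Fin n → ℂ) :
    herm v w = dotProduct (star v) w := rfl

lemma outer_mulVec (z v : Fin n → ℂ) :
    (outer z).mulVec v = fun k => z k * herm z v := by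
  funext k
  simp [outer, Matrix.mulVec, dotProduct, herm, Finset.mul_sum, mul_assoc]

lemma herm_outer_mulVec (u z v : Fin n → ℂ) :
    herm u ((outer z).mulVec v) = (starRingEnd ℂ) (herm z u) * herm z v := by
  rw [outer_mulVec]
  simp only [herm, map_sum, _root_.map_mul, Complex.conj_conj, Finset.sum_mul]
  exact Finset.sum_congr rfl fun k _ => by ring

lemma Cx_apply (z : Fin n → ℂ) (W : Matrix (Fin n) (Fin n) ℂ) (σ : ℝ)
    (C : Matrix (Fin n) (Fin n) ℂ) (hCdef : C = outer z + σ • W) (x : Fin n → ℂ) (k : Fin n) :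
    C.mulVec x k = z k * herm z x + (σ : ℂ) * W.mulVec x k := by
  rw [hCdef, Matrix.add_mulVec, Matrix.smul_mulVec, outer_mulVec]
  simp [Complex.real_smul]

lemma mu_lower (z : Fin n → ℂ) (hz : ∀ k, ‖z k‖ = 1)
    (W : Matrix (Fin n) (Fin n) ℂ) (σ : ℝ) (hσ : 0 ≤ σ)
    (C : Matrix (Fin n) (Fin n) ℂ) (hCdef : C = outer z + σ • W) (x : Fin n → ℂ)
    (k : Fin n) :
    ‖herm z x‖ - σ * linfnorm (W.mulVec x) ≤ ‖C.mulVec x k‖ := by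
  rw [Cx_apply z W σ C hCdef x k]
  have h1 : ‖z k * herm z x‖ = ‖herm z x‖ := by
    rw [norm_mul, hz, one_mul]
  have h2 : ‖(σ:ℂ) * W.mulVec x k‖ ≤ σ * linfnorm (W.mulVec x) := by
    rw [norm_mul, Complex.norm_real, Real.norm_eq_abs, _root_.abs_of_nonneg hσ]
    exact mul_le_mul_of_nonneg_left (abs_le_linfnorm _ k) hσ
  have h3 := norm_add_le (z k * herm z x + (σ:ℂ) * W.mulVec x k)
    (-((σ:ℂ) * W.mulVec x k))
  simp only [add_neg_cancel_right, map_neg, norm_neg] at h3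
  rw [h1] at h3
  linarith

lemma outer_isHermitian (x : Fin n → ℂ) : (outer x).IsHermitian := by
  ext i j
  simp [outer, Matrix.conjTranspose_apply, mul_comm]

lemma C_isHermitian (z : Fin n → ℂ) (W : Matrix (Fin n) (Fin n) ℂ) (hW : W.IsHermitian)
    (σ : ℝ) (C : Matrix (Fin n) (Fin n) ℂ) (hCdef : C = outer z + σ • W) :
    C.IsHermitian := by
  rw [hCdef]
  ext i j
  simp only [Matrix.conjTranspose_apply, Matrix.add_apply, Matrix.smul_apply,
    Matrix.of_apply, outer, star_add, star_smul, star_trivial, star_mul',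
    starRingEnd_apply, star_star]
  rw [mul_comm, hW.apply]

lemma S_isHermitian (C : Matrix (Fin n) (Fin n) ℂ) (hC : C.IsHermitian)
    (d : Fin n → ℝ) (S : Matrix (Fin n) (Fin n) ℂ)
    (hSdef : S = Matrix.diagonal (fun k => ((d k : ℝ) : ℂ)) - C) :
    S.IsHermitian := by
  rw [hSdef]
  refine Matrix.IsHermitian.sub ?_ hC
  rw [Matrix.isHermitian_diagonal_iff]
  intro k
  exact Complex.conj_ofReal _

lemma diag_C_outer (C : Matrix (Fin n) (Fin n) ℂ) (x : Fin n → ℂ)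
    (hx : ∀ k, ‖x k‖ = 1)
    (hfix : C.mulVec x = fun k => (‖C.mulVec x k‖ : ℂ) * x k) (k : Fin n) :
    (C * outer x) k k = ((‖C.mulVec x k‖ : ℝ) : ℂ) := by
  have h1 : (C * outer x) k k = C.mulVec x k * (starRingEnd ℂ) (x k) := by
    simp [Matrix.mul_apply, outer, Matrix.mulVec, dotProduct, Finset.sum_mul, mul_assoc]
  have h2 : x k * (starRingEnd ℂ) (x k) = 1 := by
    rw [Complex.mul_conj, Complex.normSq_eq_norm_sq, hx, one_pow, Complex.ofReal_one]
  rw [h1, congrFun hfix k, mul_assoc, h2, mul_one, norm_mul, Complex.norm_real, Real.norm_eq_abs,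
    _root_.abs_of_nonneg (norm_nonneg _), hx, mul_one]

lemma S_mulVec_x (C : Matrix (Fin n) (Fin n) ℂ) (x : Fin n → ℂ)
    (hx : ∀ k, ‖x k‖ = 1)
    (hfix : C.mulVec x = fun k => (‖C.mulVec x k‖ : ℂ) * x k)
    (S : Matrix (Fin n) (Fin n) ℂ)
    (hSdef : S = Matrix.diagonal (fun k => ((((C * outer x) k k).re : ℝ) : ℂ)) - C) :
    S.mulVec x = 0 := by
  funext k
  rw [hSdef, Matrix.sub_mulVec]
  simp only [Pi.sub_apply, Matrix.mulVec_diagonal]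
  rw [diag_C_outer C x hx hfix k]
  simp only [Complex.ofReal_re]
  rw [congrFun hfix k]
  simp [hx]

/-- conjugation-symmetry of the quadratic form of a Hermitian matrix -/
lemma star_quadform {A : Matrix (Fin n) (Fin n) ℂ} (hA : A.IsHermitian) (v w : Fin n → ℂ) :
    star (dotProduct (star v) (A.mulVec w))
      = dotProduct (star w) (A.mulVec v) := by
  rw [star_dotProduct, star_star, Matrix.star_mulVec, hA,
    ← dotProduct_mulVec]

lemma herm_lin₂ (x v : Fin n → ℂ) (c : ℂ) :
    herm x (v - c • x) = herm x v - c * herm x x := by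
  simp [herm, mul_sub, Finset.sum_sub_distrib, Finset.mul_sum]
  exact Finset.sum_congr rfl fun k _ => by ring

lemma quadform_decomp {S : Matrix (Fin n) (Fin n) ℂ} (hS : S.IsHermitian)
    (x : Fin n → ℂ) (hSx : S.mulVec x = 0) (v : Fin n → ℂ) (c : ℂ) :
    dotProduct (star v) (S.mulVec v)
      = dotProduct (star (v - c • x)) (S.mulVec (v - c • x)) := by
  set u := v - c • x with hu
  have hv : v = c • x + u := by rw [hu]; abel
  have hSv : S.mulVec v = S.mulVec u := by
    rw [hv, Matrix.mulVec_add, Matrix.mulVec_smul, hSx]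
    simp
  have hxu : dotProduct (star x) (S.mulVec u) = 0 := by
    have := star_quadform hS u x
    rw [hSx] at this
    simp only [dotProduct_zero, star_zero] at this
    exact this.symm
  rw [hSv, hv]
  rw [star_add, add_dotProduct, star_smul, smul_dotProduct, hxu]
  simp

lemma quad_re (d : Fin n → ℝ) (z : Fin n → ℂ) (W : Matrix (Fin n) (Fin n) ℂ) (σ : ℝ)
    (C : Matrix (Fin n) (Fin n) ℂ) (hCdef : C = outer z + σ • W)
    (S : Matrix (Fin n) (Fin n) ℂ)
    (hSdef : S = Matrix.diagonal (fun k => ((d k : ℝ) : ℂ)) - C) (u : Fin n → ℂ) :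
    (dotProduct (star u) (S.mulVec u)).re
      = (∑ k, d k * Complex.normSq (u k)) - Complex.normSq (herm z u)
        - σ * (dotProduct (star u) (W.mulVec u)).re := by
  have c1 : dotProduct (star u) (S.mulVec u)
      = dotProduct (star u) ((Matrix.diagonal (fun k => ((d k : ℝ) : ℂ))).mulVec u)
        - dotProduct (star u) ((outer z).mulVec u)
        - (σ : ℂ) * dotProduct (star u) (W.mulVec u) := by
    rw [hSdef, hCdef, Matrix.sub_mulVec, Matrix.add_mulVec, Matrix.smul_mulVec,
      dotProduct_sub, dotProduct_add, dotProduct_smul]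
    simp [Complex.real_smul]
    ring
  have t1 : dotProduct (star u) ((Matrix.diagonal (fun k => ((d k : ℝ) : ℂ))).mulVec u)
      = (((∑ k, d k * Complex.normSq (u k)) : ℝ) : ℂ) := by
    push_cast
    rw [dotProduct]
    refine Finset.sum_congr rfl fun k _ => ?_
    rw [Matrix.mulVec_diagonal, Pi.star_apply]
    rw [show star (u k) * ((d k : ℂ) * u k) = (d k : ℂ) * (u k * star (u k)) by ring]
    rw [← starRingEnd_apply, Complex.mul_conj]
  have t2 : dotProduct (star u) ((outer z).mulVec u)
      = ((Complex.normSq (herm z u) : ℝ) : ℂ) := by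
    rw [← herm_eq_dot, herm_outer_mulVec]
    rw [mul_comm, Complex.mul_conj]
  rw [c1, t1, t2]
  simp [Complex.sub_re, Complex.re_ofReal_mul]

lemma quad_lower (hn : 0 < n) (z : Fin n → ℂ) (hz : ∀ k, ‖z k‖ = 1)
    (W : Matrix (Fin n) (Fin n) ℂ) (σ : ℝ) (hσ : 0 ≤ σ)
    (C : Matrix (Fin n) (Fin n) ℂ) (hCdef : C = outer z + σ • W)
    (x : Fin n → ℂ) (hx : ∀ k, ‖x k‖ = 1)
    (hphase : herm z x = ((‖herm z x‖ : ℝ) : ℂ))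
    (S : Matrix (Fin n) (Fin n) ℂ)
    (hSdef : S = Matrix.diagonal (fun k => (((‖C.mulVec x k‖ : ℝ)) : ℂ)) - C)
    (u : Fin n → ℂ) (hu : herm x u = 0) :
    ((n : ℝ) - 3 / 2 * d2 z x ^ 2 - σ * linfnorm (W.mulVec x) - σ * opNorm W)
        * l2norm u ^ 2
      ≤ (dotProduct (star u) (S.mulVec u)).re := by
  set r := ‖herm z x‖ with hrdef
  set L := linfnorm (W.mulVec x)
  set P := l2norm u ^ 2 with hP
  have hd2 : d2 z x ^ 2 = 2 * n - 2 * r := d2_sq z x hz hx hphase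
  have hl2 : P = ∑ k, Complex.normSq (u k) := by
    rw [hP, sq_l2norm]
    exact Finset.sum_congr rfl fun k _ => Complex.sq_norm (u k)
  have hP0 : 0 ≤ P := by rw [hP]; positivity
  have ha : (r - σ * L) * P ≤ ∑ k, ‖C.mulVec x k‖ * Complex.normSq (u k) := by
    rw [hl2, Finset.mul_sum]
    refine Finset.sum_le_sum fun k _ => ?_
    exact mul_le_mul_of_nonneg_right (mu_lower z hz W σ hσ C hCdef x k)
      (Complex.normSq_nonneg _)
  have hb : Complex.normSq (herm z u) ≤ d2 z x ^ 2 * P := by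
    rw [← Complex.sq_norm, hP, ← mul_pow]
    have h1 := abs_herm_orth z x u hu
    have h2 : (0:ℝ) ≤ ‖herm z u‖ := norm_nonneg _
    nlinarith
  have hc : σ * (dotProduct (star u) (W.mulVec u)).re ≤ σ * (opNorm W * P) := by
    refine mul_le_mul_of_nonneg_left ?_ hσ
    have h1 : (dotProduct (star u) (W.mulVec u)).re
        ≤ ‖herm u (W.mulVec u)‖ := by
      rw [herm_eq_dot]
      exact Complex.re_le_norm _
    have h2 := abs_herm_le u (W.mulVec u)
    have h3 := l2norm_mulVec_le W u
    have h4 := l2norm_nonneg u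
    calc (dotProduct (star u) (W.mulVec u)).re
        ≤ l2norm u * l2norm (W.mulVec u) := le_trans h1 h2
    _ ≤ l2norm u * (opNorm W * l2norm u) := by
        exact mul_le_mul_of_nonneg_left h3 h4
    _ = opNorm W * P := by rw [hP]; ring
  rw [quad_re (fun k => ‖C.mulVec x k‖) z W σ C hCdef S hSdef u]
  have hgap : ((n : ℝ) - 3 / 2 * d2 z x ^ 2 - σ * L - σ * opNorm W)
      = (r - σ * L) - d2 z x ^ 2 - σ * opNorm W := by
    rw [hd2]; ring
  rw [hgap, sub_mul, sub_mul]
  linarith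

section main
variable (hn : 0 < n) (x : Fin n → ℂ) (hx : ∀ k, ‖x k‖ = 1)
  (S : Matrix (Fin n) (Fin n) ℂ) (hS : S.IsHermitian) (hSx : S.mulVec x = 0)
  (gap : ℝ) (hgap : 0 < gap)
  (hquad : ∀ u : Fin n → ℂ, herm x u = 0 →
    gap * l2norm u ^ 2 ≤ (dotProduct (star u) (S.mulVec u)).re)

include hn hx in
lemma orth_part (v : Fin n → ℂ) : herm x (v - (herm x v / n) • x) = 0 := by
  rw [herm_lin₂, herm_self x hx, div_mul_cancel₀, sub_self]
  exact_mod_cast Nat.cast_ne_zero.mpr hn.ne'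

include hn hx hS hSx hgap hquad in
lemma S_psd : S.PosSemidef := by
  refine Matrix.PosSemidef.of_dotProduct_mulVec_nonneg hS fun v => ?_
  set u := v - (herm x v / n) • x with hu
  have horth : herm x u = 0 := orth_part hn x hx v
  rw [quadform_decomp hS x hSx v (herm x v / n)]
  rw [Complex.le_def]
  constructor
  · simp only [Complex.zero_re]
    have h1 := hquad u horth
    nlinarith [l2norm_nonneg u, sq_nonneg (l2norm u)]
  · have := star_quadform hS u u
    have him := congrArg Complex.im this
    simp only [Complex.star_def, Complex.conj_im] at him
    simp only [Complex.zero_im]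
    linarith

include hn hx hS hSx hgap hquad in
lemma S_ker (v : Fin n → ℂ) (hv : S.mulVec v = 0) : ∃ c : ℂ, v = c • x := by
  refine ⟨herm x v / n, ?_⟩
  set u := v - (herm x v / n) • x with hu
  have horth : herm x u = 0 := orth_part hn x hx v
  have h0 : dotProduct (star v) (S.mulVec v) = 0 := by rw [hv, dotProduct_zero]
  rw [quadform_decomp hS x hSx v (herm x v / n)] at h0
  have h1 := hquad u horth
  rw [← hu] at h0
  rw [h0] at h1
  simp only [Complex.zero_re] at h1
  have hP : l2norm u ^ 2 ≤ 0 := by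
    by_contra hcon
    push_neg at hcon
    nlinarith
  have hP2 : l2norm u = 0 := by nlinarith [l2norm_nonneg u, sq_nonneg (l2norm u)]
  have hu0 : u = 0 := l2norm_eq_zero hP2
  rw [hu] at hu0
  exact (sub_eq_zero.mp hu0)

include hn hx hS hSx hgap hquad in
lemma S_rank : S.rank = n - 1 := by
  have hx0 : x ≠ 0 := by
    intro h
    have := hx ⟨0, hn⟩
    rw [h] at this
    simp at this
  have hker : LinearMap.ker S.mulVecLin = Submodule.span ℂ {x} := by
    apply le_antisymm
    · intro v hv
      obtain ⟨c, hc⟩ := S_ker hn x hx S hS hSx gap hgap hquad v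
        (by simpa using hv)
      exact Submodule.mem_span_singleton.mpr ⟨c, hc.symm⟩
    · rw [Submodule.span_le, Set.singleton_subset_iff]
      simpa using hSx
  have hker1 : Module.finrank ℂ (LinearMap.ker S.mulVecLin) = 1 := by
    rw [hker]
    exact finrank_span_singleton hx0
  have hrn := LinearMap.finrank_range_add_finrank_ker S.mulVecLin
  rw [hker1, Module.finrank_fin_fun] at hrn
  have : S.rank = Module.finrank ℂ (LinearMap.range S.mulVecLin) := rfl
  omega

end main

lemma diag_mul_outer (C : Matrix (Fin n) (Fin n) ℂ) (v : Fin n → ℂ) (k : Fin n) :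
    (C * outer v) k k = C.mulVec v k * (starRingEnd ℂ) (v k) := by
  simp [Matrix.mul_apply, outer, Matrix.mulVec, dotProduct, Finset.sum_mul, mul_assoc]

lemma dot_eq_trace (C : Matrix (Fin n) (Fin n) ℂ) (v : Fin n → ℂ) :
    dotProduct (star v) (C.mulVec v) = Matrix.trace (C * outer v) := by
  rw [Matrix.trace]
  simp only [Matrix.diag]
  rw [dotProduct]
  exact Finset.sum_congr rfl fun k _ => by
    rw [diag_mul_outer, mul_comm, starRingEnd_apply]; rfl

lemma outer_psd (v : Fin n → ℂ) : (outer v).PosSemidef := by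
  refine Matrix.PosSemidef.of_dotProduct_mulVec_nonneg (outer_isHermitian v) fun w => ?_
  rw [← herm_eq_dot, herm_outer_mulVec, mul_comm, Complex.mul_conj]
  exact_mod_cast Complex.normSq_nonneg _

lemma trace_diag_mul (d : Fin n → ℝ) (Y : Matrix (Fin n) (Fin n) ℂ) :
    Matrix.trace (Matrix.diagonal (fun k => ((d k : ℝ) : ℂ)) * Y)
      = ∑ k, ((d k : ℝ) : ℂ) * Y k k := by
  rw [Matrix.trace]
  simp only [Matrix.diag]
  exact Finset.sum_congr rfl fun k _ => by rw [Matrix.diagonal_mul]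

lemma diag_BSB (B S : Matrix (Fin n) (Fin n) ℂ) (j : Fin n) :
    (B * S * Bᴴ) j j
      = dotProduct (star (star (B j))) (S.mulVec (star (B j))) := by
  rw [star_star]
  simp only [Matrix.mul_apply, Matrix.conjTranspose_apply, dotProduct, Matrix.mulVec,
    Finset.sum_mul, Finset.mul_sum, Pi.star_apply]
  rw [Finset.sum_comm]
  exact Finset.sum_congr rfl fun k _ => Finset.sum_congr rfl fun l _ => by ring

lemma trace_S_mul (S Y : Matrix (Fin n) (Fin n) ℂ) (B : Matrix (Fin n) (Fin n) ℂ)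
    (hB : Y = Bᴴ * B) : Matrix.trace (S * Y) = Matrix.trace (B * S * Bᴴ) := by
  rw [hB, ← mul_assoc]
  exact Matrix.trace_mul_cycle S Bᴴ B

open scoped MatrixOrder in
lemma trace_S_mul_nonneg {S : Matrix (Fin n) (Fin n) ℂ} (hS : S.PosSemidef)
    {Y : Matrix (Fin n) (Fin n) ℂ} (hY : Y.PosSemidef) :
    0 ≤ (Matrix.trace (S * Y)).re := by
  obtain ⟨B, hB⟩ : ∃ B : Matrix (Fin n) (Fin n) ℂ, Y = Bᴴ * B :=
    CStarAlgebra.nonneg_iff_eq_star_mul_self.mp hY.nonneg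
  rw [trace_S_mul S Y B hB, Matrix.trace]
  simp only [Matrix.diag]
  rw [Complex.re_sum]
  refine Finset.sum_nonneg fun j _ => ?_
  rw [diag_BSB]
  exact (Complex.le_def.mp (hS.dotProduct_mulVec_nonneg (star (B j)))).1

open scoped MatrixOrder in
lemma trace_S_mul_zero (hn : 0 < n) (x : Fin n → ℂ) (hx : ∀ k, ‖x k‖ = 1)
    {S : Matrix (Fin n) (Fin n) ℂ} (hS : S.PosSemidef)
    (hker : ∀ v : Fin n → ℂ, S.mulVec v = 0 → ∃ c : ℂ, v = c • x)
    {Y : Matrix (Fin n) (Fin n) ℂ} (hY : Y.PosSemidef) (hdiag : ∀ k, Y k k = 1)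
    (htr : (Matrix.trace (S * Y)).re = 0) : Y = outer x := by
  obtain ⟨B, hB⟩ : ∃ B : Matrix (Fin n) (Fin n) ℂ, Y = Bᴴ * B :=
    CStarAlgebra.nonneg_iff_eq_star_mul_self.mp hY.nonneg
  rw [trace_S_mul S Y B hB, Matrix.trace] at htr
  simp only [Matrix.diag] at htr
  rw [Complex.re_sum] at htr
  have hterm : ∀ j ∈ Finset.univ, (0:ℝ) ≤ ((B * S * Bᴴ) j j).re := fun j _ => by
    rw [diag_BSB]
    exact (Complex.le_def.mp (hS.dotProduct_mulVec_nonneg (star (B j)))).1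
  have hzero : ∀ j ∈ (Finset.univ : Finset (Fin n)), ((B * S * Bᴴ) j j).re = 0 :=
    (Finset.sum_eq_zero_iff_of_nonneg hterm).mp htr
  have hcol : ∀ j, ∃ c : ℂ, star (B j) = c • x := by
    intro j
    have h1 : ((B * S * Bᴴ) j j) = 0 := by
      have h2 := hzero j (Finset.mem_univ j)
      have h3 : ((B * S * Bᴴ) j j).im = 0 := by
        rw [diag_BSB]
        exact ((Complex.le_def.mp (hS.dotProduct_mulVec_nonneg (star (B j)))).2).symm
      exact Complex.ext h2 h3
    rw [diag_BSB] at h1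
    exact hker _ ((hS.dotProduct_mulVec_zero_iff (star (B j))).mp h1)
  choose c hc using hcol
  have hBent : ∀ k i, B k i = star (c k * x i) := by
    intro k i
    have := congrFun (hc k) i
    simp only [Pi.star_apply, Pi.smul_apply, smul_eq_mul] at this
    rw [← star_star (B k i), this]
  have hxx : ∀ j, x j * star (x j) = 1 := by
    intro j
    rw [← starRingEnd_apply, Complex.mul_conj, Complex.normSq_eq_norm_sq, hx, one_pow,
      Complex.ofReal_one]
  have hY2 : ∀ i j, Y i j = (∑ k, c k * star (c k)) * (x i * star (x j)) := by
    intro i j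
    rw [hB]
    simp only [Matrix.mul_apply, Matrix.conjTranspose_apply]
    rw [Finset.sum_mul]
    refine Finset.sum_congr rfl fun k _ => ?_
    rw [hBent k i, hBent k j, star_star]
    simp only [star_mul']
    ring
  have hsum1 : (∑ k, c k * star (c k)) = 1 := by
    have := hY2 ⟨0, hn⟩ ⟨0, hn⟩
    rw [hdiag, hxx] at this
    rw [mul_one] at this
    exact this.symm
  ext i j
  rw [hY2 i j, hsum1, one_mul]
  rfl

lemma outer_ext (hn : 0 < n) (x v : Fin n → ℂ) (hx : ∀ k, ‖x k‖ = 1)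
    (hv : ∀ k, ‖v k‖ = 1) (h : outer v = outer x) :
    ∃ θ : ℝ, v = fun k => Complex.exp (θ * Complex.I) * x k := by
  set j0 : Fin n := ⟨0, hn⟩
  set cc : ℂ := (starRingEnd ℂ) (x j0) * v j0 with hcc
  have hcabs : ‖cc‖ = 1 := by
    rw [hcc, norm_mul, Complex.norm_conj, hx, hv, one_mul]
  refine ⟨Complex.arg cc, ?_⟩
  have hexp : Complex.exp ((Complex.arg cc : ℂ) * Complex.I) = cc := by
    have := Complex.norm_mul_exp_arg_mul_I cc
    rw [hcabs, Complex.ofReal_one, one_mul] at this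
    exact this
  funext k
  rw [hexp, hcc]
  have h1 : v k * (starRingEnd ℂ) (v j0) = x k * (starRingEnd ℂ) (x j0) := by
    have := congrFun (congrFun h k) j0
    simpa [outer] using this
  have h2 : v j0 * (starRingEnd ℂ) (v j0) = 1 := by
    rw [Complex.mul_conj, Complex.normSq_eq_norm_sq, hv, one_pow, Complex.ofReal_one]
  calc v k = v k * (v j0 * (starRingEnd ℂ) (v j0)) := by rw [h2, mul_one]
  _ = (v k * (starRingEnd ℂ) (v j0)) * v j0 := by ring
  _ = (x k * (starRingEnd ℂ) (x j0)) * v j0 := by rw [h1]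
  _ = (starRingEnd ℂ) (x j0) * v j0 * x k := by ring

end Aux

/-- if `x` is a unit-modulus fixed point (`Cx = diag(μ)x`, `μₖ = |(Cx)ₖ|`)
with `n - (3/2) d₂(z,x)² - σ‖Wx‖∞ - σ‖W‖₂ > 0`, then `S = Re(ddiag(Cxx*)) - C` is PSD of
rank `n-1`; hence `xx*` is the unique SDP solution and `x` the unique (up to phase)
maximizer of `v*Cv` over unit-modulus vectors. -/
theorem stmt19 (n : ℕ) (hn : 0 < n) (z : Fin n → ℂ) (hz : ∀ k, ‖z k‖ = 1)
    (W : Matrix (Fin n) (Fin n) ℂ) (hW : W.IsHermitian) (σ : ℝ) (hσ : 0 ≤ σ)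
    (C : Matrix (Fin n) (Fin n) ℂ) (hCdef : C = outer z + σ • W)
    (x : Fin n → ℂ) (hx : ∀ k, ‖x k‖ = 1)
    (hfix : C.mulVec x = fun k => (‖C.mulVec x k‖ : ℂ) * x k)
    (hphase : herm z x = (‖herm z x‖ : ℂ))
    (hcond : 0 < (n : ℝ) - 3 / 2 * d2 z x ^ 2 - σ * linfnorm (W.mulVec x) - σ * opNorm W)
    (S : Matrix (Fin n) (Fin n) ℂ)
    (hSdef : S = Matrix.diagonal (fun k => ((((C * outer x) k k).re : ℝ) : ℂ)) - C) :
    S.PosSemidef ∧ S.rank = n - 1 ∧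
    (∀ Y : Matrix (Fin n) (Fin n) ℂ, Y.PosSemidef → (∀ k, Y k k = 1) →
      ((C * Y).trace).re ≤ ((C * outer x).trace).re ∧
      (((C * Y).trace).re = ((C * outer x).trace).re → Y = outer x)) ∧
    (∀ v : Fin n → ℂ, (∀ k, ‖v k‖ = 1) →
      (dotProduct (star v) (C.mulVec v)).re ≤
        (dotProduct (star x) (C.mulVec x)).re ∧
      ((dotProduct (star v) (C.mulVec v)).re =
          (dotProduct (star x) (C.mulVec x)).re →
        ∃ θ : ℝ, v = fun k => Complex.exp (θ * Complex.I) * x k)) := by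
  -- translate the diagonal of `C xx*` to the multipliers `μ k = |(Cx)ₖ|`
  have hdfun : (fun k => ((((C * outer x) k k).re : ℝ) : ℂ))
      = fun k => ((‖C.mulVec x k‖ : ℝ) : ℂ) := by
    funext k
    rw [diag_C_outer C x hx hfix k, Complex.ofReal_re]
  have hSdef' : S = Matrix.diagonal (fun k => ((‖C.mulVec x k‖ : ℝ) : ℂ)) - C := by
    rw [hSdef, hdfun]
  have hC : C.IsHermitian := C_isHermitian z W hW σ C hCdef
  have hSherm : S.IsHermitian :=
    S_isHermitian C hC (fun k => ‖C.mulVec x k‖) S hSdef'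
  have hSx : S.mulVec x = 0 := S_mulVec_x C x hx hfix S hSdef
  set gap : ℝ := (n : ℝ) - 3 / 2 * d2 z x ^ 2 - σ * linfnorm (W.mulVec x) - σ * opNorm W
    with hgapdef
  have hquad : ∀ u : Fin n → ℂ, herm x u = 0 →
      gap * l2norm u ^ 2 ≤ (dotProduct (star u) (S.mulVec u)).re :=
    fun u hu => quad_lower hn z hz W σ hσ C hCdef x hx hphase S hSdef' u hu
  have hpsd : S.PosSemidef := S_psd hn x hx S hSherm hSx gap hcond hquad
  have hrank : S.rank = n - 1 := S_rank hn x hx S hSherm hSx gap hcond hquad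
  have hker : ∀ v : Fin n → ℂ, S.mulVec v = 0 → ∃ c : ℂ, v = c • x :=
    S_ker hn x hx S hSherm hSx gap hcond hquad
  -- decomposition of the trace objective
  have hCD : C = Matrix.diagonal (fun k => ((‖C.mulVec x k‖ : ℝ) : ℂ)) - S := by
    rw [hSdef']
    abel
  have htrace : ∀ Y : Matrix (Fin n) (Fin n) ℂ,
      Matrix.trace (C * Y)
        = (∑ k, ((‖C.mulVec x k‖ : ℝ) : ℂ) * Y k k) - Matrix.trace (S * Y) := by
    intro Y
    conv_lhs => rw [hCD]
    rw [Matrix.sub_mul, Matrix.trace_sub, trace_diag_mul]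
  have houterdiag : ∀ k, (outer x) k k = 1 := by
    intro k
    show x k * (starRingEnd ℂ) (x k) = 1
    rw [Complex.mul_conj, Complex.normSq_eq_norm_sq, hx, one_pow, Complex.ofReal_one]
  have hSouter : Matrix.trace (S * outer x) = 0 := by
    have h1 : S * outer x = 0 := by
      ext i j
      show dotProduct (S i) (fun l => x l * (starRingEnd ℂ) (x j)) = (0 : Matrix (Fin n) (Fin n) ℂ) i j
      have : dotProduct (S i) (fun l => x l * (starRingEnd ℂ) (x j))
          = S.mulVec x i * (starRingEnd ℂ) (x j) := by
        simp [dotProduct, Matrix.mulVec, Finset.sum_mul, mul_assoc]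
      rw [this, hSx]
      simp
    rw [h1, Matrix.trace_zero]
  -- part 3 : SDP optimality and uniqueness
  have part3 : ∀ Y : Matrix (Fin n) (Fin n) ℂ, Y.PosSemidef → (∀ k, Y k k = 1) →
      ((C * Y).trace).re ≤ ((C * outer x).trace).re ∧
      (((C * Y).trace).re = ((C * outer x).trace).re → Y = outer x) := by
    intro Y hY hYdiag
    have hYtr : ((C * Y).trace).re
        = (∑ k, ((‖C.mulVec x k‖ : ℝ) : ℂ)).re - ((S * Y).trace).re := by
      rw [htrace Y]
      simp only [Complex.sub_re]
      congr 2
      exact Finset.sum_congr rfl fun k _ => by rw [hYdiag, mul_one]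
    have hXtr : ((C * outer x).trace).re
        = (∑ k, ((‖C.mulVec x k‖ : ℝ) : ℂ)).re := by
      rw [htrace (outer x), hSouter]
      simp only [Complex.sub_re, Complex.zero_re, sub_zero]
      congr 1
      exact Finset.sum_congr rfl fun k _ => by rw [houterdiag, mul_one]
    have hnn : 0 ≤ ((S * Y).trace).re := trace_S_mul_nonneg hpsd hY
    constructor
    · rw [hYtr, hXtr]
      linarith
    · intro heq
      rw [hYtr, hXtr] at heq
      have h0 : ((S * Y).trace).re = 0 := by linarith
      exact trace_S_mul_zero hn x hx hpsd hker hY hYdiag h0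
  refine ⟨hpsd, hrank, part3, ?_⟩
  intro v hv
  have hvpsd : (outer v).PosSemidef := outer_psd v
  have hvdiag : ∀ k, (outer v) k k = 1 := by
    intro k
    show v k * (starRingEnd ℂ) (v k) = 1
    rw [Complex.mul_conj, Complex.normSq_eq_norm_sq, hv, one_pow, Complex.ofReal_one]
  obtain ⟨hle, heq⟩ := part3 (outer v) hvpsd hvdiag
  have hvd : dotProduct (star v) (C.mulVec v) = (C * outer v).trace :=
    dot_eq_trace C v
  have hxd : dotProduct (star x) (C.mulVec x) = (C * outer x).trace :=
    dot_eq_trace C x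
  constructor
  · rw [hvd, hxd]
    exact hle
  · intro h
    rw [hvd, hxd] at h
    exact outer_ext hn x v hx hv (heq h)

end PhaseSync
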